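/- Let ε > 0, e > 0, and n, t ∈ ℕ with n ≥ 1. If z_1,…,z_n ∈ ℝ are pairwise (e/n)-separated (i.e., |z_i − z_j| ≥ e/n for all i ≠ j), and S ⊆ ℝ is a union of t intervals with Lebesgue measure λ(S) ≤ ε, then for every δ with 0 < δ < e/(2n), λ(⋃_{i=1}^n B(z_i, δ) \ S) ≥ (n − 2t − nε/e)·δ. -/

import Mathlib

open MeasureTheory Filter

noncomputable section

/-- Lebesgue measure on `[0,1)`. -/
def lam : Measure ℝ := volume.restrict (Set.Ico 0 1)

/-- `⋂_{n} ⋃_{i ≥ n} A i`: the set of points lying in `A i` for infinitely many `i`. -/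
def limsupSet {α : Type*} (A : ℕ → Set α) : Set α :=
  ⋂ n, ⋃ i, ⋃ _ : n ≤ i, A i

/-- A sequence of positive reals which is non-increasing with divergent sum. -/
def standardSeq (a : ℕ → ℝ) : Prop :=
  (∀ i, 0 < a i) ∧ (∀ m n, m ≤ n → a n ≤ a m) ∧ ¬ Summable a

/-- The left endpoint of the `j`-th interval determined by the length vector `L`. -/
def pieceLeft {d : ℕ} (L : Fin d → ℝ) (j : Fin d) : ℝ :=
  ∑ k ∈ Finset.univ.filter (fun k => k < j), L k

/-- `x` belongs to the `j`-th interval `I_j = [∑_{k<j} l_k, ∑_{k≤j} l_k)`. -/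
def inPiece {d : ℕ} (L : Fin d → ℝ) (j : Fin d) (x : ℝ) : Prop :=
  pieceLeft L j ≤ x ∧ x < pieceLeft L j + L j

open scoped Classical in
/-- The interval exchange transformation `S_{L,π}` (extended by the identity off `[0,1)`). -/
def iet {d : ℕ} (L : Fin d → ℝ) (π : Equiv.Perm (Fin d)) (x : ℝ) : ℝ :=
  if h : ∃ j, inPiece L j x then
    x - pieceLeft L h.choose + ∑ k ∈ Finset.univ.filter (fun k => π k < π h.choose), L k
  else x

/-- Irreducibility of a permutation: no proper initial segment is invariant. -/
def IrredPerm {d : ℕ} (π : Equiv.Perm (Fin d)) : Prop :=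
  ∀ k : Fin d, (k : ℕ) + 1 < d → Finset.image π (Finset.Iic k) ≠ Finset.Iic k

/-- The simplex of length vectors. -/
def simplexSet (d : ℕ) : Set (Fin d → ℝ) :=
  {L | (∀ i, 0 < L i) ∧ ∑ i, L i = 1}

/-- Normalization of a positive length vector to the simplex. -/
def normLen {d : ℕ} (L : Fin d → ℝ) : Fin d → ℝ := fun i => L i / ∑ j, L j


/-- An ord-connected subset of `ℝ` of finite measure containing a point is bounded. -/
lemma sep_aux_bdd {s : Set ℝ} (hs : s.OrdConnected) (hfin : volume s ≠ ⊤) {x : ℝ}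
    (hx : x ∈ s) : BddBelow s ∧ BddAbove s := by
  constructor
  · by_contra hb
    have hsub : Set.Iic x ⊆ s := by
      intro w hw
      obtain ⟨p, hp, hpw⟩ : ∃ p ∈ s, p < w := by
        by_contra hC
        push_neg at hC
        exact hb ⟨w, fun y hy => hC y hy⟩
      exact hs.out hp hx ⟨hpw.le, hw⟩
    have : volume (Set.Iic x) ≤ volume s := measure_mono hsub
    rw [Real.volume_Iic] at this
    exact hfin (top_unique this)
  · by_contra hb
    have hsub : Set.Ici x ⊆ s := by
      intro w hw
      obtain ⟨p, hp, hpw⟩ : ∃ p ∈ s, w < p := by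
        by_contra hC
        push_neg at hC
        exact hb ⟨w, fun y hy => hC y hy⟩
      exact hs.out hx hp ⟨hw, hpw.le⟩
    have : volume (Set.Ici x) ≤ volume s := measure_mono hsub
    rw [Real.volume_Ici] at this
    exact hfin (top_unique this)

lemma sep_aux_mem {s : Set ℝ} (hs : s.OrdConnected) (hbb : BddBelow s) (hba : BddAbove s)
    (hne : s.Nonempty) {y : ℝ} (h1 : sInf s < y) (h2 : y < sSup s) : y ∈ s := by
  obtain ⟨p, hp, hpy⟩ := (csInf_lt_iff hbb hne).1 h1
  obtain ⟨q, hq, hyq⟩ := (lt_csSup_iff hba hne).1 h2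
  exact hs.out hp hq ⟨hpy.le, hyq.le⟩

/-- separated points escape a small union of intervals. -/
theorem separated_lemma (ε e : ℝ) (hε : 0 < ε) (he : 0 < e) (n t : ℕ) (hn : 1 ≤ n)
    (z : Fin n → ℝ) (hsep : ∀ i j, i ≠ j → e / n ≤ |z i - z j|)
    (I : Fin t → Set ℝ) (hI : ∀ i, (I i).OrdConnected)
    (hS : volume (⋃ i, I i) ≤ ENNReal.ofReal ε)
    (δ : ℝ) (hδ : 0 < δ) (hδ' : δ < e / (2 * n)) :
    ENNReal.ofReal (((n : ℝ) - 2 * t - n * ε / e) * δ) ≤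
      volume ((⋃ i, Metric.ball (z i) δ) \ ⋃ i, I i) := by
  classical
  have hn0 : (0:ℝ) < (n:ℝ) := by exact_mod_cast hn
  rcases le_or_gt ((n : ℝ) - 2 * t - n * ε / e) 0 with hneg | hpos
  · have h0 : ((n : ℝ) - 2 * t - n * ε / e) * δ ≤ 0 :=
      mul_nonpos_iff.2 (Or.inr ⟨hneg, hδ.le⟩)
    rw [ENNReal.ofReal_eq_zero.2 h0]
    exact zero_le
  set S : Set ℝ := ⋃ i, I i with hSdef
  set r : ℝ := e / n with hrdef
  have hr : 0 < r := div_pos he hn0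
  have h2δ : 2 * δ < r := by
    have hkey : 2 * (e / (2 * (n:ℝ))) = r := by
      rw [hrdef]; field_simp
    linarith
  have hSfin : ∀ j, volume (I j) ≠ ⊤ := fun j =>
    ne_of_lt (lt_of_le_of_lt (le_trans (measure_mono (Set.subset_iUnion I j)) hS)
      ENNReal.ofReal_lt_top)
  set K : Fin n → Set ℝ := fun i => Set.Ico (z i - δ) (z i + r - δ) with hK
  set J : Fin n → Set ℝ := fun i => Set.Ioo (z i - δ) (z i + r - δ) with hJ
  have hKdisj : ∀ i i' : Fin n, i ≠ i' → ∀ p, p ∈ K i → p ∈ K i' → False := by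
    intro i i' hne p hp hp'
    have h1 := hsep i i' hne
    simp only [hK, Set.mem_Ico] at hp hp'
    have : |z i - z i'| < r := abs_sub_lt_iff.2 ⟨by linarith, by linarith⟩
    linarith
  have hball : ∀ i i' : Fin n, i ≠ i' →
      Disjoint (Metric.ball (z i) δ) (Metric.ball (z i') δ) := by
    intro i i' hne
    apply Metric.ball_disjoint_ball
    have h1 := hsep i i' hne
    rw [Real.dist_eq]
    linarith
  set Tag : Fin n → Prop := fun i => ∃ j, sInf (I j) ∈ K i ∨ sSup (I j) ∈ K i with hTagdef
  have hkey : ∀ i, ¬ Tag i → ∀ x, x ∈ Metric.ball (z i) δ → x ∈ S → J i ⊆ S := by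
    intro i hti x hxb hxS
    obtain ⟨j, hxj⟩ : ∃ j, x ∈ I j := by
      rwa [hSdef, Set.mem_iUnion] at hxS
    have hne : (I j).Nonempty := ⟨x, hxj⟩
    obtain ⟨hbb, hba⟩ := sep_aux_bdd (hI j) (hSfin j) hxj
    have hax : sInf (I j) ≤ x := csInf_le hbb hxj
    have hxb' : x ≤ sSup (I j) := le_csSup hba hxj
    have hx1 : z i - δ < x ∧ x < z i + δ := by
      rw [Metric.mem_ball, Real.dist_eq, abs_lt] at hxb
      constructor <;> linarith [hxb.1, hxb.2]
    simp only [hTagdef, not_exists, not_or] at hti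
    have ha : sInf (I j) < z i - δ := by
      by_contra h
      push_neg at h
      exact (hti j).1 (by simp only [hK, Set.mem_Ico]; exact ⟨h, by linarith [hx1.2]⟩)
    have hb : z i + r - δ ≤ sSup (I j) := by
      by_contra h
      push_neg at h
      exact (hti j).2 (by simp only [hK, Set.mem_Ico]; exact ⟨by linarith [hx1.1], h⟩)
    intro y hy
    simp only [hJ, Set.mem_Ioo] at hy
    have hyI : y ∈ I j :=
      sep_aux_mem (hI j) hbb hba hne (by linarith [hy.1]) (by linarith [hy.2])
    exact Set.mem_iUnion.2 ⟨j, hyI⟩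
  set T : Finset (Fin n) := Finset.univ.filter Tag with hTdef
  set X : Finset (Fin n) := Finset.univ.filter (fun i => J i ⊆ S) with hXdef
  set C : Finset (Fin n) := Finset.univ \ (T ∪ X) with hCdef
  -- card of T
  have hTcard : T.card ≤ 2 * t := by
    have hsub : T ⊆ Finset.univ.biUnion (fun j : Fin t =>
        (Finset.univ.filter (fun i => sInf (I j) ∈ K i)) ∪
        (Finset.univ.filter (fun i => sSup (I j) ∈ K i))) := by
      intro i hi
      obtain ⟨j, hj⟩ : Tag i := (Finset.mem_filter.1 hi).2
      refine Finset.mem_biUnion.2 ⟨j, Finset.mem_univ _, ?_⟩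
      rcases hj with hj | hj
      · exact Finset.mem_union_left _ (Finset.mem_filter.2 ⟨Finset.mem_univ _, hj⟩)
      · exact Finset.mem_union_right _ (Finset.mem_filter.2 ⟨Finset.mem_univ _, hj⟩)
    calc T.card ≤ _ := Finset.card_le_card hsub
      _ ≤ ∑ j : Fin t, ((Finset.univ.filter (fun i => sInf (I j) ∈ K i)) ∪
          (Finset.univ.filter (fun i => sSup (I j) ∈ K i))).card := Finset.card_biUnion_le
      _ ≤ ∑ _j : Fin t, 2 := by
        apply Finset.sum_le_sum
        intro j _
        refine le_trans (Finset.card_union_le _ _) ?_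
        have h1 : (Finset.univ.filter (fun i => sInf (I j) ∈ K i)).card ≤ 1 := by
          apply Finset.card_le_one.2
          intro a ha b hb
          by_contra hab
          exact hKdisj a b hab _ (Finset.mem_filter.1 ha).2 (Finset.mem_filter.1 hb).2
        have h2 : (Finset.univ.filter (fun i => sSup (I j) ∈ K i)).card ≤ 1 := by
          apply Finset.card_le_one.2
          intro a ha b hb
          by_contra hab
          exact hKdisj a b hab _ (Finset.mem_filter.1 ha).2 (Finset.mem_filter.1 hb).2
        omega
      _ = 2 * t := by simp [Finset.sum_const, mul_comm]
  -- card of X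
  have hXr : (X.card : ℝ) * r ≤ ε := by
    have hJd : Set.PairwiseDisjoint (↑X : Set (Fin n)) J := by
      intro a _ b _ hab
      apply Set.disjoint_left.2
      intro p hp hp'
      exact hKdisj a b hab p (Set.Ioo_subset_Ico_self hp) (Set.Ioo_subset_Ico_self hp')
    have h1 : volume (⋃ i ∈ X, J i) = ∑ i ∈ X, volume (J i) :=
      measure_biUnion_finset hJd (fun i _ => measurableSet_Ioo)
    have h2 : ∀ i : Fin n, volume (J i) = ENNReal.ofReal r := by
      intro i
      simp only [hJ]
      rw [Real.volume_Ioo]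
      congr 1
      ring
    have h3 : (⋃ i ∈ X, J i) ⊆ S := by
      intro p hp
      obtain ⟨i, hiX, hpi⟩ := Set.mem_iUnion₂.1 hp
      exact (Finset.mem_filter.1 hiX).2 hpi
    have h4 : (X.card : ENNReal) * ENNReal.ofReal r ≤ ENNReal.ofReal ε := by
      calc (X.card : ENNReal) * ENNReal.ofReal r = ∑ i ∈ X, volume (J i) := by
            simp [h2, Finset.sum_const, nsmul_eq_mul]
        _ = volume (⋃ i ∈ X, J i) := h1.symm
        _ ≤ volume S := measure_mono h3
        _ ≤ ENNReal.ofReal ε := hS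
    rw [← ENNReal.ofReal_natCast, ← ENNReal.ofReal_mul (by positivity)] at h4
    exact (ENNReal.ofReal_le_ofReal_iff hε.le).1 h4
  have hXcard : (X.card : ℝ) ≤ (n : ℝ) * ε / e := by
    rw [le_div_iff₀ he]
    have h := mul_le_mul_of_nonneg_right hXr hn0.le
    rw [mul_assoc, hrdef, div_mul_cancel₀ _ (ne_of_gt hn0)] at h
    linarith
  -- card of C
  have hCcard : (n : ℝ) - 2 * t - (n : ℝ) * ε / e ≤ (C.card : ℝ) := by
    have h1 : C.card = n - (T ∪ X).card := by
      rw [hCdef, Finset.card_sdiff_of_subset (Finset.subset_univ _), Finset.card_univ, Fintype.card_fin]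
    have h2 : (T ∪ X).card ≤ T.card + X.card := Finset.card_union_le _ _
    have h3 : (T ∪ X).card ≤ n := by
      refine le_trans (Finset.card_le_card (Finset.subset_univ _)) ?_
      simp
    have h4 : (C.card : ℝ) = (n : ℝ) - ((T ∪ X).card : ℝ) := by
      rw [h1]
      push_cast [Nat.cast_sub h3]
      ring
    have h5 : ((T ∪ X).card : ℝ) ≤ (T.card : ℝ) + (X.card : ℝ) := by exact_mod_cast h2
    have h6 : (T.card : ℝ) ≤ 2 * t := by exact_mod_cast hTcard
    linarith
  -- clean balls avoid S
  have hCsub : (⋃ i ∈ C, Metric.ball (z i) δ) ⊆ (⋃ i, Metric.ball (z i) δ) \ S := by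
    intro x hx
    obtain ⟨i, hiC, hxi⟩ := Set.mem_iUnion₂.1 hx
    refine ⟨Set.mem_iUnion.2 ⟨i, hxi⟩, ?_⟩
    intro hxS
    have hi' := Finset.mem_sdiff.1 hiC
    have hnT : ¬ Tag i := fun h => hi'.2 (Finset.mem_union_left _
      (Finset.mem_filter.2 ⟨Finset.mem_univ _, h⟩))
    have hnX : ¬ (J i ⊆ S) := fun h => hi'.2 (Finset.mem_union_right _
      (Finset.mem_filter.2 ⟨Finset.mem_univ _, h⟩))
    exact hnX (hkey i hnT x hxi hxS)
  have hCvol : (C.card : ENNReal) * ENNReal.ofReal (2 * δ) ≤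
      volume ((⋃ i, Metric.ball (z i) δ) \ S) := by
    have hbd : Set.PairwiseDisjoint (↑C : Set (Fin n)) (fun i => Metric.ball (z i) δ) := by
      intro a _ b _ hab
      exact hball a b hab
    have h1 : volume (⋃ i ∈ C, Metric.ball (z i) δ) = ∑ i ∈ C, volume (Metric.ball (z i) δ) :=
      measure_biUnion_finset hbd (fun i _ => measurableSet_ball)
    calc (C.card : ENNReal) * ENNReal.ofReal (2 * δ)
        = ∑ i ∈ C, volume (Metric.ball (z i) δ) := by
          simp [Real.volume_ball, Finset.sum_const, nsmul_eq_mul]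
      _ = volume (⋃ i ∈ C, Metric.ball (z i) δ) := h1.symm
      _ ≤ volume ((⋃ i, Metric.ball (z i) δ) \ S) := measure_mono hCsub
  calc ENNReal.ofReal (((n : ℝ) - 2 * t - n * ε / e) * δ)
      ≤ ENNReal.ofReal ((C.card : ℝ) * (2 * δ)) := by
        apply ENNReal.ofReal_le_ofReal
        nlinarith [hCcard, hpos, hδ]
    _ = (C.card : ENNReal) * ENNReal.ofReal (2 * δ) := by
        rw [ENNReal.ofReal_mul (by positivity), ENNReal.ofReal_natCast]
    _ ≤ volume ((⋃ i, Metric.ball (z i) δ) \ S) := hCvol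

end
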